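/- Let H be a finite-dimensional real Hilbert space and let A, B, C be self-adjoint linear operators on H. Let a₁,…,a_m > 0 and b₁,…,b_m > 0. Suppose v, v₁, …, v_m : [0,∞) → H are continuously differentiable, f : [0,∞) → H is continuous, and for all t > 0: (B + Σ_{i=1}^m (a_i/b_i) C) v′(t) − Σ_{i=1}^m (a_i/b_i) C v_i′(t) + A v(t) = f(t), and v_i′(t) + b_i v_i(t) − v′(t) = 0 for each i. Then the energy function E(t) = ⟪A v(t), v(t)⟫ + Σ_{i=1}^m a_i ⟪C v_i(t), v_i(t)⟫ is differentiable on (0,∞) and satisfies, for all t > 0, E′(t) = 2 ⟪f(t), v′(t)⟫ − 2 ⟪B v′(t), v′(t)⟫ − 2 Σ_{i=1}^m (a_i/b_i) ⟪C (v′(t) − v_i′(t)), v′(t) − v_i′(t)⟫. -/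

import Mathlib

open scoped RealInnerProductSpace
open MeasureTheory

/-- Energy identity for the transformed local system: the energy
`E(t) = ⟪A v, v⟫ + Σᵢ aᵢ ⟪C vᵢ, vᵢ⟫` is differentiable on `(0, ∞)` with
`E'(t) = 2⟪f, v'⟫ - 2⟪B v', v'⟫ - 2 Σᵢ (aᵢ/bᵢ) ⟪C (v' - vᵢ'), v' - vᵢ'⟫`. -/
theorem energy_identity_local_system
    {H : Type*} [NormedAddCommGroup H] [InnerProductSpace ℝ H] [FiniteDimensional ℝ H]
    (A B C : H →ₗ[ℝ] H)
    (hAsa : ∀ x y : H, ⟪A x, y⟫ = ⟪x, A y⟫)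
    (hBsa : ∀ x y : H, ⟪B x, y⟫ = ⟪x, B y⟫)
    (hCsa : ∀ x y : H, ⟪C x, y⟫ = ⟪x, C y⟫)
    (m : ℕ) (a b : Fin m → ℝ) (ha : ∀ i, 0 < a i) (hb : ∀ i, 0 < b i)
    (f : ℝ → H) (hf : ContinuousOn f (Set.Ici 0))
    (v v' : ℝ → H) (vi vi' : Fin m → ℝ → H)
    (hv : ∀ t ∈ Set.Ici (0:ℝ), HasDerivWithinAt v (v' t) (Set.Ici 0) t)
    (hv' : ContinuousOn v' (Set.Ici 0))
    (hvi : ∀ i, ∀ t ∈ Set.Ici (0:ℝ), HasDerivWithinAt (vi i) (vi' i t) (Set.Ici 0) t)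
    (hvi' : ∀ i, ContinuousOn (vi' i) (Set.Ici 0))
    (heq : ∀ t > (0:ℝ),
      (B (v' t) + ∑ i, (a i / b i) • C (v' t)) - (∑ i, (a i / b i) • C (vi' i t))
        + A (v t) = f t)
    (heqi : ∀ i, ∀ t > (0:ℝ), vi' i t + b i • vi i t - v' t = 0)
    (E : ℝ → ℝ)
    (hE : ∀ t, E t = ⟪A (v t), v t⟫ + ∑ i, a i * ⟪C (vi i t), vi i t⟫) :
    ∀ t > (0:ℝ), HasDerivAt E
      (2 * ⟪f t, v' t⟫ - 2 * ⟪B (v' t), v' t⟫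
        - 2 * ∑ i, (a i / b i) * ⟪C (v' t - vi' i t), v' t - vi' i t⟫) t := by
  intro t ht
  have hti : t ∈ Set.Ici (0:ℝ) := le_of_lt ht
  have hmem : Set.Ici (0:ℝ) ∈ nhds t := Ici_mem_nhds ht
  have hvt : HasDerivAt v (v' t) t := (hv t hti).hasDerivAt hmem
  have hvit : ∀ i, HasDerivAt (vi i) (vi' i t) t :=
    fun i => (hvi i t hti).hasDerivAt hmem
  -- derivative of each term
  have hAvt : HasDerivAt (fun s => A (v s)) (A (v' t)) t := by
    have := (LinearMap.toContinuousLinearMap A).hasFDerivAt.comp_hasDerivAt t hvt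
    simpa [Function.comp_def] using this
  have hCvit : ∀ i, HasDerivAt (fun s => C (vi i s)) (C (vi' i t)) t := by
    intro i
    have := (LinearMap.toContinuousLinearMap C).hasFDerivAt.comp_hasDerivAt t (hvit i)
    simpa [Function.comp_def] using this
  have h1 : HasDerivAt (fun s => (⟪A (v s), v s⟫:ℝ))
      (⟪A (v t), v' t⟫ + ⟪A (v' t), v t⟫) t := hAvt.inner ℝ hvt
  have h2 : ∀ i, HasDerivAt (fun s => a i * (⟪C (vi i s), vi i s⟫:ℝ))
      (a i * (⟪C (vi i t), vi' i t⟫ + ⟪C (vi' i t), vi i t⟫)) t :=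
    fun i => ((hCvit i).inner ℝ (hvit i)).const_mul (a i)
  have hED : HasDerivAt E
      ((⟪A (v t), v' t⟫ + ⟪A (v' t), v t⟫)
        + ∑ i, a i * (⟪C (vi i t), vi' i t⟫ + ⟪C (vi' i t), vi i t⟫)) t := by
    have hEeq : E = fun s => (⟪A (v s), v s⟫:ℝ) + ∑ i, a i * ⟪C (vi i s), vi i s⟫ :=
      funext hE
    rw [hEeq]
    exact h1.add (HasDerivAt.fun_sum (fun i _ => h2 i))
  -- simplify derivative using self-adjointness
  have hAsymm : (⟪A (v' t), v t⟫:ℝ) = ⟪A (v t), v' t⟫ := by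
    rw [hAsa, real_inner_comm]
  have hCsymm : ∀ i, (⟪C (vi' i t), vi i t⟫:ℝ) = ⟪C (vi i t), vi' i t⟫ := by
    intro i; rw [hCsa, real_inner_comm]
  have hD : HasDerivAt E
      (2 * ⟪A (v t), v' t⟫ + ∑ i, 2 * a i * ⟪C (vi i t), vi' i t⟫) t := by
    convert hED using 2
    · rw [hAsymm]; ring
    · apply Finset.sum_congr rfl
      intro i _
      rw [hCsymm i]; ring
  -- algebraic identification of the derivative value
  have hsub : ∀ i, v' t - vi' i t = b i • vi i t := by
    intro i
    have h := heqi i t ht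
    rw [sub_eq_zero] at h
    rw [← h]; abel
  have hfe : (⟪f t, v' t⟫:ℝ) = ⟪B (v' t), v' t⟫
      + ∑ i, (a i / b i) * ⟪C (v' t), v' t⟫
      - ∑ i, (a i / b i) * ⟪C (vi' i t), v' t⟫
      + ⟪A (v t), v' t⟫ := by
    rw [← heq t ht]
    simp [inner_add_left, inner_sub_left, sum_inner, real_inner_smul_left]
  have key : ∀ i : Fin m,
      (a i / b i) * ⟪C (v' t), v' t⟫ - (a i / b i) * ⟪C (vi' i t), v' t⟫
        - (a i / b i) * ⟪C (v' t - vi' i t), v' t - vi' i t⟫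
      = a i * ⟪C (vi i t), vi' i t⟫ := by
    intro i
    have hb' : b i ≠ 0 := (hb i).ne'
    have e1 : (⟪C (v' t), v' t⟫:ℝ) - ⟪C (vi' i t), v' t⟫
        = b i * ⟪C (vi i t), v' t⟫ := by
      rw [← inner_sub_left, ← map_sub, hsub i, LinearMap.map_smul, real_inner_smul_left]
    have e2 : (⟪C (v' t - vi' i t), v' t - vi' i t⟫:ℝ)
        = b i * b i * ⟪C (vi i t), vi i t⟫ := by
      rw [hsub i, LinearMap.map_smul, real_inner_smul_left, real_inner_smul_right]; ring
    have e3 : (⟪C (vi i t), v' t⟫:ℝ)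
        = ⟪C (vi i t), vi' i t⟫ + b i * ⟪C (vi i t), vi i t⟫ := by
      have hv'' : v' t = vi' i t + b i • vi i t := by
        have h := heqi i t ht; rw [sub_eq_zero] at h; exact h.symm
      rw [hv'', inner_add_right, real_inner_smul_right]
    have hq : (a i / b i) * b i = a i := div_mul_cancel₀ _ hb'
    rw [e2]
    linear_combination (a i / b i) * e1 + a i * e3
      + (⟪C (vi i t), v' t⟫ - b i * ⟪C (vi i t), vi i t⟫) * hq
  have hsum : ∑ i, ((a i / b i) * ⟪C (v' t), v' t⟫ - (a i / b i) * ⟪C (vi' i t), v' t⟫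
        - (a i / b i) * ⟪C (v' t - vi' i t), v' t - vi' i t⟫)
      = ∑ i, a i * ⟪C (vi i t), vi' i t⟫ :=
    Finset.sum_congr rfl fun i _ => key i
  have hfinal : 2 * ⟪f t, v' t⟫ - 2 * ⟪B (v' t), v' t⟫
      - 2 * ∑ i, (a i / b i) * ⟪C (v' t - vi' i t), v' t - vi' i t⟫
      = 2 * ⟪A (v t), v' t⟫ + ∑ i, 2 * a i * ⟪C (vi i t), vi' i t⟫ := by
    simp only [Finset.sum_sub_distrib] at hsum
    have h2a : ∑ i, 2 * a i * ⟪C (vi i t), vi' i t⟫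
        = 2 * ∑ i, a i * ⟪C (vi i t), vi' i t⟫ := by
      rw [Finset.mul_sum]; apply Finset.sum_congr rfl; intro i _; ring
    rw [hfe, h2a]
    linarith
  exact hfinal ▸ hD
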